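/- Let σ, ω, ϑ be integers with σ, ϑ not divisible by 3, η ≥ 1, γ = σϑ, and suppose 3 does not divide 2σ − ω. Define m(x,y) = (1/3)(1 + e^{2πi σ x} + e^{2πi (ω x + 3^η ϑ y)}). Then every zero (x,y) of m has the form x = ℓ1/(3γ), y = ℓ2/(3^{η+1} γ) with integers ℓ1, ℓ2 both not divisible by 3. -/

import Mathlib

open Complex Real

theorem stmt_6 (σ ω ϑ γ : ℤ) (η : ℕ) (hη : 1 ≤ η)
    (hσ3 : ¬ (3 : ℤ) ∣ σ) (hϑ3 : ¬ (3 : ℤ) ∣ ϑ)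
    (hγ : γ = σ * ϑ)
    (hdiv : ¬ (3 : ℤ) ∣ 2 * σ - ω)
    (m : ℝ → ℝ → ℂ)
    (hm : ∀ x y : ℝ, m x y = (1/3) * (1 + Complex.exp (2 * Real.pi * Complex.I * (σ * x))
      + Complex.exp (2 * Real.pi * Complex.I * (ω * x + 3 ^ η * ϑ * y))))
    (x y : ℝ) (hxy : m x y = 0) :
    ∃ ℓ1 ℓ2 : ℤ, ¬ (3 : ℤ) ∣ ℓ1 ∧ ¬ (3 : ℤ) ∣ ℓ2 ∧
      x = (ℓ1 : ℝ) / (3 * γ) ∧ y = (ℓ2 : ℝ) / (3 ^ (η + 1) * γ) := by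
  have h3p : Prime (3 : ℤ) := Int.prime_three
  have hσ0 : (σ : ℝ) ≠ 0 := by
    exact_mod_cast fun h => hσ3 (by simp [h] : (3:ℤ) ∣ σ)
  have hϑ0 : (ϑ : ℝ) ≠ 0 := by
    exact_mod_cast fun h => hϑ3 (by simp [h] : (3:ℤ) ∣ ϑ)
  set z1 : ℂ := 2 * Real.pi * Complex.I * (σ * x) with hz1
  set z2 : ℂ := 2 * Real.pi * Complex.I * (ω * x + 3 ^ η * ϑ * y) with hz2
  set u : ℂ := Complex.exp z1 with hu
  set v : ℂ := Complex.exp z2 with hv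
  have h3 : (1 : ℂ) + u + v = 0 := by
    have h := hxy
    rw [hm] at h
    linear_combination 3 * h
  have hu' : u * Complex.exp (-z1) = 1 := by
    rw [hu, ← Complex.exp_add]; simp
  have hv' : v * Complex.exp (-z2) = 1 := by
    rw [hv, ← Complex.exp_add]; simp
  have hcu : (starRingEnd ℂ) u = Complex.exp (-z1) := by
    rw [hu, ← Complex.exp_conj]
    congr 1
    simp only [hz1, map_mul, map_ofNat, Complex.conj_I, Complex.conj_ofReal, map_intCast]
    ring
  have hcv : (starRingEnd ℂ) v = Complex.exp (-z2) := by
    rw [hv, ← Complex.exp_conj]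
    congr 1
    simp only [hz2, map_mul, map_add, map_pow, map_ofNat, Complex.conj_I, Complex.conj_ofReal,
      map_intCast]
    ring
  have hconj : (1 : ℂ) + Complex.exp (-z1) + Complex.exp (-z2) = 0 := by
    have h := congrArg (starRingEnd ℂ) h3
    simpa [hcu, hcv] using h
  have hprod : (-1 - u) * (-1 - Complex.exp (-z1)) = 1 := by
    have hveq : v = -1 - u := by linear_combination h3
    have he : Complex.exp (-z2) = -1 - Complex.exp (-z1) := by linear_combination hconj
    calc (-1 - u) * (-1 - Complex.exp (-z1)) = v * Complex.exp (-z2) := by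
          rw [hveq, he]
      _ = 1 := hv'
  have hsum : u + Complex.exp (-z1) = -1 := by linear_combination hprod - hu'
  have key : u ^ 2 + u + 1 = 0 := by linear_combination u * hsum - hu'
  have hu3 : u ^ 3 = 1 := by linear_combination (u - 1) * key
  have hvu : v = u ^ 2 := by linear_combination h3 - key
  -- Extract the integer n with 3σx = n
  have hexp3 : Complex.exp (z1 + z1 + z1) = 1 := by
    rw [Complex.exp_add, Complex.exp_add]
    linear_combination hu3
  obtain ⟨n, hn⟩ := Complex.exp_eq_one_iff.mp hexp3
  have h2πI : (2 * (Real.pi : ℂ) * Complex.I) ≠ 0 := by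
    refine mul_ne_zero (mul_ne_zero (by norm_num) ?_) Complex.I_ne_zero
    exact Complex.ofReal_ne_zero.mpr Real.pi_ne_zero
  have hA' : ((σ : ℂ) * x * 3 - n) = 0 := by
    have h0 : (2 * (Real.pi : ℂ) * Complex.I) * ((σ : ℂ) * x * 3 - n) = 0 := by
      rw [hz1] at hn
      linear_combination hn
    exact (mul_eq_zero.mp h0).resolve_left h2πI
  have hA : (σ : ℝ) * x * 3 = n := by
    have := sub_eq_zero.mp hA'
    exact_mod_cast this
  -- 3 does not divide n
  have hn3 : ¬ (3 : ℤ) ∣ n := by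
    rintro ⟨j, rfl⟩
    have hx1 : (σ : ℝ) * x = j := by
      push_cast at hA ⊢
      linarith
    have hu1 : u = 1 := by
      rw [hu, hz1]
      have : 2 * (Real.pi : ℂ) * Complex.I * ((σ : ℂ) * x) = j * (2 * Real.pi * Complex.I) := by
        have : ((σ : ℂ) * x) = (j : ℂ) := by exact_mod_cast hx1
        rw [this]; ring
      rw [this, Complex.exp_int_mul_two_pi_mul_I]
    rw [hu1] at key
    norm_num at key
  -- Extract k with z2 = 2 z1 + k 2πI
  have hexp2 : Complex.exp z2 = Complex.exp (z1 + z1) := by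
    rw [Complex.exp_add, ← hu, ← hv, hvu]; ring
  obtain ⟨k, hk⟩ := Complex.exp_eq_exp_iff_exists_int.mp hexp2
  have hB' : ((ω : ℂ) * x + 3 ^ η * ϑ * y - (2 * σ * x + k)) = 0 := by
    have h0 : (2 * (Real.pi : ℂ) * Complex.I) *
        ((ω : ℂ) * x + 3 ^ η * ϑ * y - (2 * σ * x + k)) = 0 := by
      rw [hz1, hz2] at hk
      linear_combination hk
    exact (mul_eq_zero.mp h0).resolve_left h2πI
  have hB : (ω : ℝ) * x + 3 ^ η * ϑ * y = 2 * σ * x + k := by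
    have := sub_eq_zero.mp hB'
    exact_mod_cast this
  refine ⟨n * ϑ, (2 * σ - ω) * n + 3 * σ * k, ?_, ?_, ?_, ?_⟩
  · intro h
    rcases h3p.dvd_mul.mp h with h | h
    · exact hn3 h
    · exact hϑ3 h
  · intro h
    have h1 : (3 : ℤ) ∣ (2 * σ - ω) * n := by
      have h2 : (3 : ℤ) ∣ 3 * σ * k := ⟨σ * k, by ring⟩
      have := h.sub h2
      simpa using this
    rcases h3p.dvd_mul.mp h1 with h | h
    · exact hdiv h
    · exact hn3 h
  · rw [hγ]
    push_cast
    field_simp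
    linear_combination hA
  · rw [hγ]
    push_cast
    field_simp
    linear_combination (3:ℝ) * σ * hB + ((2*(σ:ℝ) - ω)) * hA
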